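/- Let F be a field, U, V positive integers, R a positive integer, and h_{u,v} ∈ F^R for (u,v) ∈ [U]×[V] such that ∑_{(u,v)} h_{u,v} = 0 and every collection of at most R distinct vectors among {h_{u,v}} ∪ {∑_{v∈[V]} h_{u,v} : u ∈ [U]} is linearly independent. Fix k ∈ [U] and a set 𝒯 ⊆ [U]×[V] avoiding row k and one column, with the total count m := (U-1-|𝒰2|) + (V-|𝒯1|) - 1 + |𝒯| ≤ R, where 𝒯1 = 𝒯∩({k}×[V]) and 𝒰2 = {u : {u}×[V] ⊆ 𝒯}. Then the vector family consisting of {∑_{v} h_{u,v} : u ∈ [U]\({k}∪𝒰2)}, {h_{k,v} : v ∈ [V], (k,v) ∉ 𝒯1}, and {h_{u,v} : (u,v) ∈ 𝒯} spans a subspace of dimension exactly m, i.e., exactly one linear dependence (induced by the zero-sum constraint) holds among these m+1 vectors. -/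

import Mathlib

theorem stmt_12 {F : Type*} [Field F] (U V R : ℕ)
    (hU : 0 < U) (hV : 0 < V) (hR : 0 < R)
    (h : Fin U × Fin V → Fin R → F)
    (hsum : ∑ p : Fin U × Fin V, h p = 0)
    (hgen : ∀ s : Finset ((Fin U × Fin V) ⊕ Fin U), s.card ≤ R →
      LinearIndependent F
        (fun i : {x // x ∈ s} =>
          Sum.elim h (fun u : Fin U => ∑ v : Fin V, h (u, v)) i.1))
    (k : Fin U) (𝒯 : Finset (Fin U × Fin V))
    (hrow : ∀ v : Fin V, (k, v) ∉ 𝒯)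
    (hcol : ∃ v' : Fin V, ∀ u : Fin U, (u, v') ∉ 𝒯) :
    let 𝒯1 := 𝒯.filter (fun p => p.1 = k)
    let 𝒰2 := Finset.univ.filter (fun u : Fin U => ∀ v : Fin V, (u, v) ∈ 𝒯)
    let m := (U - 1 - 𝒰2.card) + (V - 𝒯1.card) - 1 + 𝒯.card
    m ≤ R →
      Module.finrank F (Submodule.span F
        (((fun u : Fin U => ∑ v : Fin V, h (u, v)) ''
            {u : Fin U | u ≠ k ∧ u ∉ 𝒰2}) ∪
          (h '' {p : Fin U × Fin V | p.1 = k ∧ p ∉ 𝒯1}) ∪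
          (h '' ↑𝒯))) = m := by
  intro 𝒯1 𝒰2 m hmR
  obtain ⟨v0, hv0⟩ := hcol
  set rowsum : Fin U → Fin R → F := fun u => ∑ v : Fin V, h (u, v) with hrowsum
  set g : (Fin U × Fin V) ⊕ Fin U → Fin R → F := Sum.elim h rowsum with hg
  have h𝒯1 : 𝒯1 = ∅ := by
    apply Finset.eq_empty_of_forall_notMem
    intro p hp
    simp only [𝒯1, Finset.mem_filter] at hp
    have : ((k, p.2) : Fin U × Fin V) ∈ 𝒯 := by
      rw [← hp.2]; simpa using hp.1
    exact hrow p.2 this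
  have h𝒰2 : 𝒰2 = ∅ := by
    apply Finset.eq_empty_of_forall_notMem
    intro u hu
    simp only [𝒰2, Finset.mem_filter] at hu
    exact hv0 u (hu.2 v0)
  have hm : m = (U - 1) + (V - 1) + 𝒯.card := by
    simp only [m, h𝒯1, h𝒰2, Finset.card_empty]
    omega
  -- the index finset
  set s : Finset ((Fin U × Fin V) ⊕ Fin U) :=
    ((𝒯 ∪ (Finset.univ.erase v0).image (fun v => ((k, v) : Fin U × Fin V))).image Sum.inl)
      ∪ ((Finset.univ.erase k).image Sum.inr) with hs
  have hcard : s.card = m := by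
    rw [hm, hs]
    rw [Finset.card_union_of_disjoint (by
      simp [Finset.disjoint_left])]
    rw [Finset.card_image_of_injective _ Sum.inl_injective,
        Finset.card_image_of_injective _ Sum.inr_injective]
    rw [Finset.card_union_of_disjoint (by
      simp only [Finset.disjoint_left, Finset.mem_image, Finset.mem_erase]
      rintro p hp ⟨v, hv, rfl⟩
      exact hrow v hp)]
    rw [Finset.card_image_of_injective _ (fun a b hab => (Prod.mk.injEq _ _ _ _ ▸ hab).2)]
    simp [Finset.card_erase_of_mem]
    omega
  have li := hgen s (hcard ▸ hmR)
  have hrange : Set.range (fun i : {x // x ∈ s} =>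
      Sum.elim h (fun u : Fin U => ∑ v : Fin V, h (u, v)) i.1) = g '' ↑s := by
    ext x
    constructor
    · rintro ⟨⟨i, hi⟩, rfl⟩; exact ⟨i, hi, rfl⟩
    · rintro ⟨i, hi, rfl⟩; exact ⟨⟨i, hi⟩, rfl⟩
  have hfr : Module.finrank F (Submodule.span F (g '' ↑s)) = m := by
    rw [← hrange, finrank_span_eq_card li, Fintype.card_coe, hcard]
  -- the zero-sum dependency
  have hkey : h (k, v0) = -(∑ v ∈ Finset.univ.erase v0, h (k, v))
      - ∑ u ∈ Finset.univ.erase k, rowsum u := by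
    have h1 : ∑ u : Fin U, rowsum u = 0 := by
      rw [← hsum, Fintype.sum_prod_type]
    have h2 : rowsum k + ∑ u ∈ Finset.univ.erase k, rowsum u = 0 := by
      rw [Finset.add_sum_erase _ _ (Finset.mem_univ k)]; exact h1
    have h3 : rowsum k = h (k, v0) + ∑ v ∈ Finset.univ.erase v0, h (k, v) := by
      rw [hrowsum]
      exact (Finset.add_sum_erase _ (fun v => h (k, v)) (Finset.mem_univ v0)).symm
    rw [h3] at h2
    linear_combination h2
  have hmem : h (k, v0) ∈ Submodule.span F (g '' ↑s) := by
    rw [hkey]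
    apply sub_mem
    · apply neg_mem
      apply Submodule.sum_mem
      intro v hv
      apply Submodule.subset_span
      refine ⟨Sum.inl (k, v), ?_, by simp [hg]⟩
      rw [hs, Finset.mem_coe, Finset.mem_union]
      exact Or.inl (Finset.mem_image_of_mem _
        (Finset.mem_union_right _ (Finset.mem_image_of_mem _ hv)))
    · apply Submodule.sum_mem
      intro u hu
      apply Submodule.subset_span
      refine ⟨Sum.inr u, ?_, by simp [hg]⟩
      rw [hs, Finset.mem_coe, Finset.mem_union]
      exact Or.inr (Finset.mem_image_of_mem _ hu)
  have hset : (((fun u : Fin U => ∑ v : Fin V, h (u, v)) ''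
            {u : Fin U | u ≠ k ∧ u ∉ 𝒰2}) ∪
          (h '' {p : Fin U × Fin V | p.1 = k ∧ p ∉ 𝒯1}) ∪
          (h '' ↑𝒯)) = insert (h (k, v0)) (g '' ↑s) := by
    ext x
    constructor
    · rintro ((⟨u, hu, rfl⟩ | ⟨p, hp, rfl⟩) | ⟨p, hp, rfl⟩)
      · right
        refine ⟨Sum.inr u, ?_, by simp [hg, hrowsum]⟩
        rw [hs, Finset.mem_coe, Finset.mem_union]
        exact Or.inr (Finset.mem_image_of_mem _
          (Finset.mem_erase.mpr ⟨hu.1, Finset.mem_univ u⟩))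
      · by_cases hv : p.2 = v0
        · left
          have : p = (k, v0) := Prod.ext hp.1 hv
          rw [this]
        · right
          refine ⟨Sum.inl p, ?_, by simp [hg]⟩
          rw [hs, Finset.mem_coe, Finset.mem_union]
          left
          apply Finset.mem_image_of_mem
          rw [Finset.mem_union]
          right
          refine Finset.mem_image.mpr ⟨p.2, Finset.mem_erase.mpr ⟨hv, Finset.mem_univ _⟩, ?_⟩
          show ((k, p.2) : Fin U × Fin V) = p
          rw [← hp.1]
      · right
        refine ⟨Sum.inl p, ?_, by simp [hg]⟩
        rw [hs, Finset.mem_coe, Finset.mem_union]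
        exact Or.inl (Finset.mem_image_of_mem _ (Finset.mem_union_left _ hp))
    · rintro (rfl | ⟨i, hi, rfl⟩)
      · exact Or.inl (Or.inr ⟨(k, v0), ⟨rfl, by simp [h𝒯1]⟩, rfl⟩)
      · rw [hs, Finset.mem_coe, Finset.mem_union] at hi
        rcases hi with hi | hi
        · obtain ⟨p, hp, rfl⟩ := Finset.mem_image.mp hi
          rw [Finset.mem_union] at hp
          rcases hp with hp | hp
          · exact Or.inr ⟨p, hp, by simp [hg]⟩
          · obtain ⟨v, hv, rfl⟩ := Finset.mem_image.mp hp
            exact Or.inl (Or.inr ⟨(k, v), ⟨rfl, by simp [h𝒯1]⟩, by simp [hg]⟩)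
        · obtain ⟨u, hu, rfl⟩ := Finset.mem_image.mp hi
          exact Or.inl (Or.inl ⟨u, ⟨(Finset.mem_erase.mp hu).1, by simp [h𝒰2]⟩, by simp [hg, hrowsum]⟩)
  rw [hset, Submodule.span_insert_eq_span hmem, hfr]
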